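/- In the setting of the construction of ϑ (category C with binary products, monad (T, η, μ), endofunctor I, indexed category Φ : Cᵒᵖ ⥤ PartOrd with left adjoints ∃_f ⊣ f⋆, bijections θ_{X,Y} : Hom_C(X, T Y) ≃ Φ(X ⨯ I Y) satisfying (A3.3a) and (A3.3b), endofunctor F with F ∘ I ≅ I ∘ F, predicate lifting σ : Φ ⟹ Φ ∘ F^{op}, relation lifting σ̃_{X,Y} := ∃_{λ_{X,Y}} ∘ σ_{X ⨯ I Y}, and ϑ_X := θ⁻¹(σ̃_{T X, X}(∈_X))), assume the Beck–Chevalley condition holds for the λ-squares: for every f : X → X' and every Y, (F f ⨯ 1_{I F Y})⋆ ∘ ∃_{λ_{X',Y}} = ∃_{λ_{X,Y}} ∘ (F(f ⨯ 1_{I Y}))⋆. Define relational composition by S ⊙ R := θ_{X,Z}(θ⁻¹(S) • θ⁻¹(R)) for R ∈ Φ(X ⨯ I Y), S ∈ Φ(Y ⨯ I Z), where g • f := μ ∘ T g ∘ f is Kleisli composition. If σ̃ preserves relational composition, i.e. σ̃_{X,Z}(S ⊙ R) = σ̃_{Y,Z}(S) ⊙ σ̃_{X,Y}(R) for all such R,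 S, then ϑ is compatible with the multiplication of T, i.e. ϑ_X ∘ F(μ_X) = μ_{F X} ∘ T(ϑ_X) ∘ ϑ_{T X} for all X. Conversely, if this compatibility with μ holds, then σ̃(S ⊙ R) = σ̃(S) ⊙ σ̃(R) holds at least in the instance R = ∈_X and S = ∈_{T X}. -/

import Mathlib

open CategoryTheory CategoryTheory.Limits Opposite

universe v u

variable {C : Type u} [Category.{v} C]

/-- Reindexing `f⋆ = Φ(f)` along `f` in an indexed category `Φ : Cᵒᵖ ⥤ PartOrd`. -/
def reindex (Φ : Cᵒᵖ ⥤ PartOrd.{v}) {X Y : C} (f : X ⟶ Y) :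
    Φ.obj (op Y) →o Φ.obj (op X) :=
  (Φ.map f.op).hom

variable [HasBinaryProducts C]

/-- The map `λ_{X,Y} = ⟨F(pr₁), F(pr₂)⟩ : F(X ⨯ I Y) ⟶ F X ⨯ I F Y`
(using the isomorphism `F I ≅ I F`). -/
noncomputable def lamMap (F I : C ⥤ C) (ε : I ⋙ F ≅ F ⋙ I) (X Y : C) :
    F.obj (X ⨯ I.obj Y) ⟶ F.obj X ⨯ I.obj (F.obj Y) :=
  prod.lift (F.map prod.fst) (F.map prod.snd ≫ ε.hom.app Y)

/-- The relation lifting `σ̃_{X,Y} = ∃_{λ_{X,Y}} ∘ σ_{X ⨯ I Y}`. -/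
noncomputable def relLift (Φ : Cᵒᵖ ⥤ PartOrd.{v})
    (E : ∀ {X Y : C}, (X ⟶ Y) → (Φ.obj (op X) → Φ.obj (op Y)))
    (F I : C ⥤ C) (ε : I ⋙ F ≅ F ⋙ I) (σ : Φ ⟶ F.op ⋙ Φ) (X Y : C)
    (R : Φ.obj (op (X ⨯ I.obj Y))) :
    Φ.obj (op (F.obj X ⨯ I.obj (F.obj Y))) :=
  E (lamMap F I ε X Y)
    ((show Φ.obj (op (X ⨯ I.obj Y)) →o Φ.obj (op (F.obj (X ⨯ I.obj Y))) from
      (σ.app (op (X ⨯ I.obj Y))).hom) R)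

/-- The candidate Kl-law `ϑ_X = θ⁻¹(σ̃_{T X, X}(∈_X)) : F T X ⟶ T F X`. -/
noncomputable def klLawOfRelLift (T : Monad C) (I : C ⥤ C) (Φ : Cᵒᵖ ⥤ PartOrd.{v})
    (E : ∀ {X Y : C}, (X ⟶ Y) → (Φ.obj (op X) → Φ.obj (op Y)))
    (θ : ∀ X Y : C, (X ⟶ T.obj Y) ≃ Φ.obj (op (X ⨯ I.obj Y)))
    (F : C ⥤ C) (ε : I ⋙ F ≅ F ⋙ I) (σ : Φ ⟶ F.op ⋙ Φ) (X : C) :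
    F.obj (T.obj X) ⟶ T.obj (F.obj X) :=
  (θ (F.obj (T.obj X)) (F.obj X)).symm
    (relLift Φ E F I ε σ (T.obj X) X (θ (T.obj X) X (𝟙 (T.obj X))))

/-- Relational composition `S ⊙ R = θ(θ⁻¹(S) • θ⁻¹(R))`, where `•` is Kleisli
composition `g • f = f ≫ T g ≫ μ`. -/
noncomputable def relCompRel (T : Monad C) (I : C ⥤ C) (Φ : Cᵒᵖ ⥤ PartOrd.{v})
    (θ : ∀ X Y : C, (X ⟶ T.obj Y) ≃ Φ.obj (op (X ⨯ I.obj Y)))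
    {X Y Z : C} (S : Φ.obj (op (Y ⨯ I.obj Z))) (R : Φ.obj (op (X ⨯ I.obj Y))) :
    Φ.obj (op (X ⨯ I.obj Z)) :=
  θ X Z ((θ X Y).symm R ≫ T.map ((θ Y Z).symm S) ≫ T.μ.app Z)

/-- Key lemma: `σ̃(θ h) = θ(F h ≫ ϑ)`. -/
lemma relLift_theta
    (T : Monad C) (I : C ⥤ C) (Φ : Cᵒᵖ ⥤ PartOrd.{v})
    (E : ∀ {X Y : C}, (X ⟶ Y) → (Φ.obj (op X) → Φ.obj (op Y)))
    (θ : ∀ X Y : C, (X ⟶ T.obj Y) ≃ Φ.obj (op (X ⨯ I.obj Y)))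
    (hθa : ∀ {X X' Y : C} (f : X ⟶ X') (h : X' ⟶ T.obj Y),
      θ X Y (f ≫ h) = reindex Φ (prod.map f (𝟙 (I.obj Y))) (θ X' Y h))
    (F : C ⥤ C) (ε : I ⋙ F ≅ F ⋙ I) (σ : Φ ⟶ F.op ⋙ Φ)
    (hBC : ∀ {X X' : C} (f : X ⟶ X') (Y : C)
      (R : Φ.obj (op (F.obj (X' ⨯ I.obj Y)))),
      reindex Φ (prod.map (F.map f) (𝟙 (I.obj (F.obj Y))))
          (E (lamMap F I ε X' Y) R) =
        E (lamMap F I ε X Y)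
          (reindex Φ (F.map (prod.map f (𝟙 (I.obj Y)))) R))
    {X Y : C} (h : X ⟶ T.obj Y) :
    relLift Φ E F I ε σ X Y (θ X Y h) =
      θ (F.obj X) (F.obj Y) (F.map h ≫ klLawOfRelLift T I Φ E θ F ε σ Y) := by
  have h1 : θ X Y h =
      reindex Φ (prod.map h (𝟙 (I.obj Y))) (θ (T.obj Y) Y (𝟙 (T.obj Y))) := by
    rw [← hθa h (𝟙 (T.obj Y)), Category.comp_id]
  have hnat := σ.naturality ((prod.map h (𝟙 (I.obj Y))).op)
  have hnat' : ∀ R, (show Φ.obj (op (X ⨯ I.obj Y)) →o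
        Φ.obj (op (F.obj (X ⨯ I.obj Y))) from (σ.app (op (X ⨯ I.obj Y))).hom)
      (reindex Φ (prod.map h (𝟙 (I.obj Y))) R) =
      reindex Φ (F.map (prod.map h (𝟙 (I.obj Y))))
        ((show Φ.obj (op (T.obj Y ⨯ I.obj Y)) →o
          Φ.obj (op (F.obj (T.obj Y ⨯ I.obj Y))) from
          (σ.app (op (T.obj Y ⨯ I.obj Y))).hom) R) := by
    intro R
    exact congrArg (fun g => (show _ →o _ from g.hom) R) hnat
  rw [h1]
  show E (lamMap F I ε X Y)
      ((show Φ.obj (op (X ⨯ I.obj Y)) →o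
          Φ.obj (op (F.obj (X ⨯ I.obj Y))) from (σ.app (op (X ⨯ I.obj Y))).hom)
        (reindex Φ (prod.map h (𝟙 (I.obj Y))) (θ (T.obj Y) Y (𝟙 (T.obj Y))))) = _
  rw [hnat']
  rw [← hBC h Y ((show Φ.obj (op (T.obj Y ⨯ I.obj Y)) →o
      Φ.obj (op (F.obj (T.obj Y ⨯ I.obj Y))) from
      (σ.app (op (T.obj Y ⨯ I.obj Y))).hom) (θ (T.obj Y) Y (𝟙 (T.obj Y))))]
  rw [hθa (F.map h) (klLawOfRelLift T I Φ E θ F ε σ Y)]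
  congr 1
  show _ = θ (F.obj (T.obj Y)) (F.obj Y) (klLawOfRelLift T I Φ E θ F ε σ Y)
  rw [klLawOfRelLift, Equiv.apply_symm_apply]
  rfl

/-- Assuming the Beck–Chevalley condition for the `λ`-squares: if the relation
lifting `σ̃` preserves relational composition then `ϑ` is compatible with the
multiplication of `T`; conversely, compatibility with the multiplication
implies preservation of relational composition at least in the instance
`R = ∈_{T X}`, `S = ∈_X`. -/
theorem klLawOfRelLift_mult_compatible
    (T : Monad C) (I : C ⥤ C) (Φ : Cᵒᵖ ⥤ PartOrd.{v})
    (E : ∀ {X Y : C}, (X ⟶ Y) → (Φ.obj (op X) → Φ.obj (op Y)))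
    (hE : ∀ {X Y : C} (f : X ⟶ Y), GaloisConnection (E f) (reindex Φ f))
    (θ : ∀ X Y : C, (X ⟶ T.obj Y) ≃ Φ.obj (op (X ⨯ I.obj Y)))
    (hθa : ∀ {X X' Y : C} (f : X ⟶ X') (h : X' ⟶ T.obj Y),
      θ X Y (f ≫ h) = reindex Φ (prod.map f (𝟙 (I.obj Y))) (θ X' Y h))
    (hθb : ∀ {X Y Y' : C} (g : Y ⟶ Y') (h : X ⟶ T.obj Y),
      θ X Y' (h ≫ T.map g) = E (prod.map (𝟙 X) (I.map g)) (θ X Y h))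
    (F : C ⥤ C) (ε : I ⋙ F ≅ F ⋙ I) (σ : Φ ⟶ F.op ⋙ Φ)
    (hBC : ∀ {X X' : C} (f : X ⟶ X') (Y : C)
      (R : Φ.obj (op (F.obj (X' ⨯ I.obj Y)))),
      reindex Φ (prod.map (F.map f) (𝟙 (I.obj (F.obj Y))))
          (E (lamMap F I ε X' Y) R) =
        E (lamMap F I ε X Y)
          (reindex Φ (F.map (prod.map f (𝟙 (I.obj Y)))) R)) :
    ((∀ (X Y Z : C) (R : Φ.obj (op (X ⨯ I.obj Y)))
        (S : Φ.obj (op (Y ⨯ I.obj Z))),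
        relLift Φ E F I ε σ X Z (relCompRel T I Φ θ S R) =
          relCompRel T I Φ θ (relLift Φ E F I ε σ Y Z S)
            (relLift Φ E F I ε σ X Y R)) →
      (∀ X : C, F.map (T.μ.app X) ≫ klLawOfRelLift T I Φ E θ F ε σ X =
        klLawOfRelLift T I Φ E θ F ε σ (T.obj X) ≫
          T.map (klLawOfRelLift T I Φ E θ F ε σ X) ≫ T.μ.app (F.obj X))) ∧
    ((∀ X : C, F.map (T.μ.app X) ≫ klLawOfRelLift T I Φ E θ F ε σ X =
        klLawOfRelLift T I Φ E θ F ε σ (T.obj X) ≫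
          T.map (klLawOfRelLift T I Φ E θ F ε σ X) ≫ T.μ.app (F.obj X)) →
      (∀ X : C,
        relLift Φ E F I ε σ (T.obj (T.obj X)) X
            (relCompRel T I Φ θ (θ (T.obj X) X (𝟙 (T.obj X)))
              (θ (T.obj (T.obj X)) (T.obj X) (𝟙 (T.obj (T.obj X))))) =
          relCompRel T I Φ θ
            (relLift Φ E F I ε σ (T.obj X) X (θ (T.obj X) X (𝟙 (T.obj X))))
            (relLift Φ E F I ε σ (T.obj (T.obj X)) (T.obj X)
              (θ (T.obj (T.obj X)) (T.obj X) (𝟙 (T.obj (T.obj X))))))) := by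
  have key : ∀ {X Y : C} (h : X ⟶ T.obj Y),
      relLift Φ E F I ε σ X Y (θ X Y h) =
        θ (F.obj X) (F.obj Y) (F.map h ≫ klLawOfRelLift T I Φ E θ F ε σ Y) :=
    fun h => relLift_theta T I Φ E θ hθa F ε σ hBC h
  -- `∈ ⊙ ∈ = θ μ`
  have hmem : ∀ X : C,
      relCompRel T I Φ θ (θ (T.obj X) X (𝟙 (T.obj X)))
        (θ (T.obj (T.obj X)) (T.obj X) (𝟙 (T.obj (T.obj X)))) =
      θ (T.obj (T.obj X)) X (T.μ.app X) := by
    intro X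
    rw [relCompRel, Equiv.symm_apply_apply, Equiv.symm_apply_apply,
      Category.id_comp, T.toFunctor.map_id, Category.id_comp]
  -- `σ̃(∈) ⊙ σ̃(∈) = θ(ϑ_{TX} ≫ T ϑ_X ≫ μ)`
  have hrhs : ∀ X : C,
      relCompRel T I Φ θ
        (relLift Φ E F I ε σ (T.obj X) X (θ (T.obj X) X (𝟙 (T.obj X))))
        (relLift Φ E F I ε σ (T.obj (T.obj X)) (T.obj X)
          (θ (T.obj (T.obj X)) (T.obj X) (𝟙 (T.obj (T.obj X))))) =
      θ (F.obj (T.obj (T.obj X))) (F.obj X)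
        (klLawOfRelLift T I Φ E θ F ε σ (T.obj X) ≫
          T.map (klLawOfRelLift T I Φ E θ F ε σ X) ≫ T.μ.app (F.obj X)) := by
    intro X
    rw [relCompRel]
    congr 2 <;>
      · show (θ _ _).symm (relLift Φ E F I ε σ _ _ (θ _ _ (𝟙 _))) = _
        rfl
  constructor
  · intro hcomp X
    have h := hcomp (T.obj (T.obj X)) (T.obj X) X
      (θ (T.obj (T.obj X)) (T.obj X) (𝟙 (T.obj (T.obj X))))
      (θ (T.obj X) X (𝟙 (T.obj X)))
    have hk := key (X := T.obj (T.obj X)) (Y := X) (T.μ.app X)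
    rw [hmem X, hrhs X, hk] at h
    exact (θ _ _).injective h
  · intro hmul X
    have hk := key (X := T.obj (T.obj X)) (Y := X) (T.μ.app X)
    rw [hmem X, hrhs X, hk, hmul X]
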